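/- arXiv:math/0110001 — 4 statements merged into one kernel-verified Lean document; each statement's English description precedes it below -/
import Mathlib

section
/- For any words w and u in signed letters, ε_{ij}(w u w^{-1}) = ε_{ij}(u) + ε_i(w) ε_j(u) − ε_i(u) ε_j(w), where w^{-1} denotes the reversed word with all signs negated. -/
/-- A word in signed letters `m_p^{±1}`: a list of (letter index, sign),
with sign `true` meaning `+1` and `false` meaning `-1`. -/
abbrev SWord (ℓ : ℕ) := List (Fin ℓ × Bool)

/-- The sign value of a boolean sign. -/
def sgn (b : Bool) : ℤ := if b then 1 else -1

/-- `eps i w` is the exponent sum of the letter `m_i` in the word `w`. -/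
def eps {ℓ : ℕ} (i : Fin ℓ) : SWord ℓ → ℤ
  | [] => 0
  | x :: t => (if x.1 = i then sgn x.2 else 0) + eps i t

/-- `epsPair i j w` is the signed count of ordered pairs of positions `p < q`
in `w` carrying `m_i^r` and `m_j^s` respectively, each contributing `r * s`. -/
def epsPair {ℓ : ℕ} (i j : Fin ℓ) : SWord ℓ → ℤ
  | [] => 0
  | x :: t => (if x.1 = i then sgn x.2 * eps j t else 0) + epsPair i j t

/-- Formal inverse of a word: reverse the list and negate each sign. -/
def winv {ℓ : ℕ} (w : SWord ℓ) : SWord ℓ :=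
  w.reverse.map (fun x => (x.1, !x.2))

/-- The word `m_i^p` for an integer `p`: `|p|` copies of `m_i^{sign p}`. -/
def zpowWord {ℓ : ℕ} (i : Fin ℓ) (p : ℤ) : SWord ℓ :=
  List.replicate p.natAbs (i, decide (0 ≤ p))

/-- The element of the free group represented by a word of signed letters. -/
def toFree {ℓ : ℕ} (w : SWord ℓ) : FreeGroup (Fin ℓ) :=
  (w.map (fun x => if x.2 then FreeGroup.of x.1 else (FreeGroup.of x.1)⁻¹)).prod


lemma eps_append {ℓ : ℕ} (i : Fin ℓ) (a b : SWord ℓ) :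
    eps i (a ++ b) = eps i a + eps i b := by
  induction a with
  | nil => simp [eps]
  | cons x t ih => simp [eps, ih]; ring

lemma epsPair_append {ℓ : ℕ} (i j : Fin ℓ) (a b : SWord ℓ) :
    epsPair i j (a ++ b) = epsPair i j a + epsPair i j b + eps i a * eps j b := by
  induction a with
  | nil => simp [epsPair, eps]
  | cons x t ih =>
    simp only [List.cons_append, epsPair, eps, ih, eps_append]
    by_cases h : x.1 = i <;> simp only [h, if_pos, if_neg, ite_true, ite_false] <;> simp -failIfUnchanged [ih, eps_append] <;> ring_nf

lemma eps_winv {ℓ : ℕ} (i : Fin ℓ) (w : SWord ℓ) :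
    eps i (winv w) = - eps i w := by
  induction w with
  | nil => simp [winv, eps]
  | cons x t ih =>
    have : winv (x :: t) = winv t ++ [(x.1, !x.2)] := by
      simp [winv]
    rw [this, eps_append, ih]
    simp only [eps]
    by_cases h : x.1 = i <;> cases hb : x.2 <;> simp [h, sgn]

lemma epsPair_winv {ℓ : ℕ} (i j : Fin ℓ) (hij : i ≠ j) (w : SWord ℓ) :
    epsPair i j (winv w) = eps i w * eps j w - epsPair i j w := by
  induction w with
  | nil => simp [winv, epsPair, eps]
  | cons x t ih =>
    have hw : winv (x :: t) = winv t ++ [(x.1, !x.2)] := by simp [winv]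
    rw [hw, epsPair_append, ih, eps_winv]
    simp only [epsPair, eps]
    by_cases hi : x.1 = i
    · have hj : ¬ x.1 = j := by simp [hi, hij]
      cases hb : x.2 <;> simp [hi, hj, sgn, hij, Ne.symm hij] <;> ring
    · by_cases hj : x.1 = j
      · cases hb : x.2 <;> simp [hi, hj, sgn, hij, Ne.symm hij] <;> ring
      · simp [hi, hj]

/-- ε_{ij}(w u w⁻¹) = ε_{ij}(u) + ε_i(w) ε_j(u) − ε_i(u) ε_j(w). -/
theorem epsPair_conj {ℓ : ℕ} (i j : Fin ℓ) (hij : i ≠ j) (w u : SWord ℓ) :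
    epsPair i j (w ++ u ++ winv w) =
      epsPair i j u + eps i w * eps j u - eps i u * eps j w := by
  rw [epsPair_append, epsPair_append, epsPair_winv i j hij, eps_winv, eps_append]
  ring
end

section
/- The invariants ε_i and ε_{ij} (for i ≠ j) are invariant under free reduction: if the word w' is obtained from w by deleting an adjacent pair of letters m_p^{+1} m_p^{-1} or m_p^{-1} m_p^{+1}, then ε_i(w') = ε_i(w) and ε_{ij}(w') = ε_{ij}(w). Hence ε_i and ε_{ij} descend to well-defined functions on the free group F(m_1, ..., m_ℓ). -/
/-- The discrete Heisenberg group, as a carrier for the invariants. -/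
def Heis : Type := ℤ × ℤ × ℤ

instance : Mul Heis := ⟨fun x y => (x.1 + y.1, x.2.1 + y.2.1, x.2.2 + y.2.2 + x.1 * y.2.1)⟩
instance : One Heis := ⟨((0 : ℤ), (0 : ℤ), (0 : ℤ))⟩
instance : Inv Heis := ⟨fun x => (-x.1, -x.2.1, -x.2.2 + x.1 * x.2.1)⟩

lemma heis_mul (x y : Heis) :
    x * y = (x.1 + y.1, x.2.1 + y.2.1, x.2.2 + y.2.2 + x.1 * y.2.1) := rfl
lemma heis_one : (1 : Heis) = ((0 : ℤ), (0 : ℤ), (0 : ℤ)) := rfl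
lemma heis_inv (x : Heis) : x⁻¹ = (-x.1, -x.2.1, -x.2.2 + x.1 * x.2.1) := rfl

instance : Group Heis where
  mul_assoc a b c := by
    simp only [heis_mul]; refine Prod.ext ?_ (Prod.ext ?_ ?_) <;> simp only [HMul.hMul, Mul.mul] <;> grind
  one_mul a := by
    simp only [heis_mul, heis_one]; refine Prod.ext ?_ (Prod.ext ?_ ?_) <;> simp only [HMul.hMul, Mul.mul] <;> grind
  mul_one a := by
    simp only [heis_mul, heis_one]; refine Prod.ext ?_ (Prod.ext ?_ ?_) <;> simp only [HMul.hMul, Mul.mul] <;> grind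
  inv_mul_cancel a := by
    simp only [heis_mul, heis_inv, heis_one]
    refine Prod.ext ?_ (Prod.ext ?_ ?_) <;> simp only [HMul.hMul, Mul.mul] <;> grind

/-- Images of the generators in the Heisenberg group. -/
def gen {ℓ : ℕ} (i j : Fin ℓ) (k : Fin ℓ) : Heis :=
  (if k = i then 1 else 0, if k = j then 1 else 0, 0)

lemma eps_insert {ℓ : ℕ} (k : Fin ℓ) (a c : SWord ℓ) (p : Fin ℓ) (b : Bool) :
    eps k (a ++ (p, b) :: (p, !b) :: c) = eps k (a ++ c) := by
  induction a with
  | nil => cases b <;> simp [eps, sgn] <;> split <;> ring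
  | cons x t ih => simp [eps, ih]

lemma epsPair_insert {ℓ : ℕ} (i j : Fin ℓ) (hij : i ≠ j) (a c : SWord ℓ) (p : Fin ℓ) (b : Bool) :
    epsPair i j (a ++ (p, b) :: (p, !b) :: c) = epsPair i j (a ++ c) := by
  induction a with
  | nil =>
    by_cases hp : p = i
    · subst hp
      have hpj : ¬ (p = j) := hij
      cases b <;> simp [epsPair, eps, sgn, hpj] <;> ring
    · cases b <;> simp [epsPair, eps, sgn, hp]
  | cons x t ih => simp [epsPair, ih, eps_insert]

lemma lift_toFree {ℓ : ℕ} (i j : Fin ℓ) (hij : i ≠ j) (w : SWord ℓ) :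
    FreeGroup.lift (gen i j) (toFree w) = (eps i w, eps j w, epsPair i j w) := by
  induction w with
  | nil => simp [toFree, eps, epsPair, heis_one]; rfl
  | cons x t ih =>
    obtain ⟨xk, xb⟩ := x
    have hstep : toFree ((xk, xb) :: t) =
        (if xb then FreeGroup.of xk else (FreeGroup.of xk)⁻¹) * toFree t := by
      simp [toFree]
    rw [hstep, map_mul, ih]
    cases xb <;>
      simp only [if_true, if_false, Bool.false_eq_true, map_inv, FreeGroup.lift_apply_of] <;>
      simp [heis_inv, heis_mul, gen, eps, epsPair, sgn, Prod.ext_iff] <;>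
      refine Prod.ext ?_ (Prod.ext ?_ ?_) <;>
      simp only [HMul.hMul, Mul.mul, Inv.inv] <;>
      by_cases hki : xk = i <;> by_cases hkj : xk = j <;>
        first
          | (exact absurd (hki.symm.trans hkj) hij)
          | (simp [hki, hkj, hij, Ne.symm hij]; try ring)

/-- ε_i and ε_{ij} (for i ≠ j) are invariant under free reduction (deleting an
adjacent cancelling pair `m_p^{+1} m_p^{-1}` or `m_p^{-1} m_p^{+1}`), and hence
descend to well-defined functions on the free group. -/
theorem eps_epsPair_free_reduction {ℓ : ℕ} (i j : Fin ℓ) (hij : i ≠ j) :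
    (∀ (a c : SWord ℓ) (p : Fin ℓ) (b : Bool),
      eps i (a ++ c) = eps i (a ++ (p, b) :: (p, !b) :: c) ∧
      epsPair i j (a ++ c) = epsPair i j (a ++ (p, b) :: (p, !b) :: c)) ∧
    (∃ E : FreeGroup (Fin ℓ) → ℤ, ∀ w : SWord ℓ, E (toFree w) = eps i w) ∧
    (∃ E₂ : FreeGroup (Fin ℓ) → ℤ, ∀ w : SWord ℓ, E₂ (toFree w) = epsPair i j w) := by
  refine ⟨fun a c p b => ⟨(eps_insert i a c p b).symm, (epsPair_insert i j hij a c p b).symm⟩,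
    ⟨fun g => (FreeGroup.lift (gen i j) g).1, fun w => by simp only [lift_toFree i j hij w]⟩,
    ⟨fun g => (FreeGroup.lift (gen i j) g).2.2, fun w => by simp only [lift_toFree i j hij w]⟩⟩
end

section
/- Antisymmetry of the triple invariant mod linking numbers: let w_i, w_j, w_k be words in signed letters, and set μ_{pq} = ε_p(w_q) for p ≠ q. Suppose μ_{pq} = μ_{qp} for all pairs, and let δ = gcd(μ_{ij}, μ_{jk}, μ_{ik}). Define m_{ijk} = ε_{ij}(w_k) + ε_{jk}(w_i) + ε_{ki}(w_j). Then m_{ijk} + m_{jik} ≡ 0 (mod δ). -/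

lemma epsPair_add_symm {ℓ : ℕ} (i j : Fin ℓ) (hij : i ≠ j) :
    ∀ w : SWord ℓ, epsPair i j w + epsPair j i w = eps i w * eps j w
  | [] => by simp [epsPair, eps]
  | x :: t => by
    have ih := epsPair_add_symm i j hij t
    simp only [epsPair, eps]
    rcases eq_or_ne x.1 i with h | h
    · have hj : x.1 ≠ j := h ▸ hij
      simp [h, hj, hij]; linarith [ih]
    · rcases eq_or_ne x.1 j with h2 | h2
      · simp [h, h2, Ne.symm hij]; linarith [ih]
      · simp [h, h2]; linarith [ih]

/-- Antisymmetry of the triple invariant mod δ: with μ_{pq} = ε_p(w_q)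
symmetric and δ = gcd(μ_{ij}, μ_{jk}, μ_{ik}),
m_{ijk} + m_{jik} ≡ 0 (mod δ). -/
theorem m_antisymmetric {ℓ : ℕ} (i j k : Fin ℓ)
    (hij : i ≠ j) (hjk : j ≠ k) (hik : i ≠ k)
    (wi wj wk : SWord ℓ)
    (hsym_ij : eps i wj = eps j wi)
    (hsym_jk : eps j wk = eps k wj)
    (hsym_ik : eps i wk = eps k wi) :
    ((Int.gcd (Int.gcd (eps i wj) (eps j wk)) (eps i wk) : ℤ)) ∣
      ((epsPair i j wk + epsPair j k wi + epsPair k i wj) +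
       (epsPair j i wk + epsPair i k wj + epsPair k j wi)) := by
  have h1 := epsPair_add_symm i j hij wk
  have h2 := epsPair_add_symm j k hjk wi
  have h3 := epsPair_add_symm k i (Ne.symm hik) wj
  have key : (epsPair i j wk + epsPair j k wi + epsPair k i wj) +
       (epsPair j i wk + epsPair i k wj + epsPair k j wi)
      = eps i wk * eps j wk + eps j wi * eps k wi + eps k wj * eps i wj := by
    linarith
  rw [key]
  have dij : ((Int.gcd (Int.gcd (eps i wj) (eps j wk)) (eps i wk) : ℤ)) ∣ eps i wj :=
    (Int.gcd_dvd_left _ _).trans (Int.gcd_dvd_left _ _)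
  have djk : ((Int.gcd (Int.gcd (eps i wj) (eps j wk)) (eps i wk) : ℤ)) ∣ eps j wk :=
    (Int.gcd_dvd_left _ _).trans (Int.gcd_dvd_right _ _)
  have dik : ((Int.gcd (Int.gcd (eps i wj) (eps j wk)) (eps i wk) : ℤ)) ∣ eps i wk :=
    Int.gcd_dvd_right _ _
  refine dvd_add (dvd_add ?_ ?_) ?_
  · exact dik.mul_right _
  · rw [← hsym_ij]; exact dij.mul_right _
  · exact Dvd.dvd.mul_left dij _
end

section
/- Cyclic invariance of m_{ijk} mod δ: with notation as before (w_i, w_j, w_k words, μ_{pq} = ε_p(w_q), δ = gcd of the three pairwise quantities μ_{ij}, μ_{jk}, μ_{ik}, and assuming μ_{pq} = μ_{qp}), replacing w_k by any cyclic permutation v u of a factorization w_k = u v changes ε_{ij}(w_k) by a multiple of δ; hence m_{ijk} = ε_{ij}(w_k) + ε_{jk}(w_i) + ε_{ki}(w_j) is well defined in ℤ/δℤ independent of the choice of starting point (basepoint) of each word. -/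
/-- Cyclic invariance of m_{ijk} mod δ: replacing w_k = u v by the cyclic
permutation v u changes ε_{ij}(w_k) by a multiple of δ, so m_{ijk} is well
defined in ℤ/δℤ independent of the choice of basepoint. -/
theorem epsPair_basepoint_change {ℓ : ℕ} (i j k : Fin ℓ)
    (hij : i ≠ j) (hjk : j ≠ k) (hik : i ≠ k)
    (wi wj : SWord ℓ) (u v : SWord ℓ)
    (hsym_ij : eps i wj = eps j wi)
    (hsym_jk : eps j (u ++ v) = eps k wj)
    (hsym_ik : eps i (u ++ v) = eps k wi) :
    ((Int.gcd (Int.gcd (eps i wj) (eps j (u ++ v))) (eps i (u ++ v)) : ℤ)) ∣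
      (epsPair i j (u ++ v) - epsPair i j (v ++ u)) := by
  have h : epsPair i j (u ++ v) - epsPair i j (v ++ u)
      = eps i (u ++ v) * eps j v - eps i v * eps j (u ++ v) := by
    simp [epsPair_append, eps_append]; ring
  rw [h]
  exact dvd_sub
    ((Int.gcd_dvd_right _ _).mul_right _)
    ((dvd_trans (Int.gcd_dvd_left _ _) (Int.gcd_dvd_right _ _)).mul_left _)
end
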